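/- arXiv:2103.13466 — 2 statements merged into one kernel-verified Lean document; each statement's English description precedes it below -/
import Mathlib

section
/- Let (Z_i)_{i=1}^∞ be i.i.d. standard Gaussian random variables and, for each N ∈ ℕ, set u(N) = (Z₁, …, Z_N)/√(∑_{n=1}^N Z_n²) , a uniformly distributed random point of the unit sphere of ℝ^N. Then the empirical distribution of the coordinates of √N u(N), namely (1/N)∑_{n=1}^N δ_{√N u(N)_n}, converges weakly to the standard Gaussian distribution N(0,1) almost surely as N → ∞. -/
open MeasureTheory ProbabilityTheory Filter Topology BoundedContinuousFunction
open scoped ENNReal NNReal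

/-- The empirical distribution `(1/N) ∑ₙ δ_{v n}` of the entries of a vector `v ∈ ℝ^N`. -/
noncomputable def empDist {N : ℕ} (v : Fin N → ℝ) : Measure ℝ :=
  ((N : ℝ≥0∞))⁻¹ • ∑ n : Fin N, Measure.dirac (v n)

namespace Stmt3

open Real

/-! ### Gaussian second moment -/

lemma gaussPDF_eq :
    gaussianPDFReal 0 1 = fun x => (Real.sqrt (2*π))⁻¹ * Real.exp (-(1/2) * x^2) := by
  ext x
  simp only [gaussianPDFReal, NNReal.coe_one, mul_one, sub_zero]
  congr 1
  ring

lemma integral_gaussianReal_eq (g : ℝ → ℝ) :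
    ∫ x, g x ∂(gaussianReal 0 1) = ∫ x, gaussianPDFReal 0 1 x * g x := by
  rw [gaussianReal_of_var_ne_zero 0 one_ne_zero]
  have hmeas : Measurable fun x => (gaussianPDFReal 0 1 x).toNNReal :=
    (measurable_gaussianPDFReal 0 1).real_toNNReal
  have h : (volume.withDensity (gaussianPDF 0 1))
      = volume.withDensity (fun x => ((gaussianPDFReal 0 1 x).toNNReal : ℝ≥0∞)) := rfl
  rw [h, integral_withDensity_eq_integral_smul hmeas]
  congr 1; ext x
  simp [NNReal.smul_def, Real.coe_toNNReal _ (gaussianPDFReal_nonneg 0 1 x)]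

lemma integrable_gaussianReal_iff (g : ℝ → ℝ) :
    Integrable g (gaussianReal 0 1) ↔
      Integrable (fun x => gaussianPDFReal 0 1 x * g x) volume := by
  rw [gaussianReal_of_var_ne_zero 0 one_ne_zero]
  have hmeas : Measurable fun x => (gaussianPDFReal 0 1 x).toNNReal :=
    (measurable_gaussianPDFReal 0 1).real_toNNReal
  have h : (volume.withDensity (gaussianPDF 0 1))
      = volume.withDensity (fun x => ((gaussianPDFReal 0 1 x).toNNReal : ℝ≥0∞)) := rfl
  rw [h, integrable_withDensity_iff_integrable_smul hmeas]
  constructor <;> intro h' <;> refine h'.congr (Filter.Eventually.of_forall fun x => ?_) <;>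
    simp [NNReal.smul_def, Real.coe_toNNReal _ (gaussianPDFReal_nonneg 0 1 x)]

lemma integrable_sq_exp : Integrable (fun x : ℝ => x ^ 2 * Real.exp (-(1/2) * x ^ 2)) := by
  have := integrable_rpow_mul_exp_neg_mul_sq (b := 1/2) (by norm_num) (s := 2) (by norm_num)
  refine this.congr (Filter.Eventually.of_forall fun x => ?_)
  norm_num

lemma tendsto_id_exp_atTop :
    Tendsto (fun x : ℝ => x * Real.exp (-(1/2) * x ^ 2)) atTop (𝓝 0) := by
  have h := rpow_mul_exp_neg_mul_sq_isLittleO_exp_neg (b := 1/2) (by norm_num) 1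
  have h2 : Tendsto (fun x : ℝ => Real.exp (-(1/2) * x)) atTop (𝓝 0) := by
    apply Real.tendsto_exp_atBot.comp
    exact Tendsto.const_mul_atTop_of_neg (by norm_num) tendsto_id
  have h3 := h.isBigO.trans_tendsto h2
  refine h3.congr' (Filter.Eventually.of_forall fun x => ?_)
  rw [Real.rpow_one]

lemma integral_sq_exp : ∫ x : ℝ, x ^ 2 * Real.exp (-(1/2) * x ^ 2) = Real.sqrt (2 * π) := by
  have hu : ∀ x : ℝ, HasDerivAt (fun y : ℝ => y) 1 x := fun x => hasDerivAt_id x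
  have hv : ∀ x : ℝ, HasDerivAt (fun y : ℝ => -Real.exp (-(1/2) * y ^ 2))
      (x * Real.exp (-(1/2) * x ^ 2)) x := by
    intro x
    have h1 : HasDerivAt (fun y : ℝ => -(1/2) * y ^ 2) (-x) x := by
      have := (hasDerivAt_pow 2 x).const_mul (-(1/2) : ℝ)
      refine this.congr_deriv ?_
      norm_num; ring
    have h2 := (h1.exp).neg
    refine h2.congr_deriv ?_
    ring
  have huv' : Integrable ((fun y : ℝ => y) * fun x => x * Real.exp (-(1/2) * x ^ 2)) := by
    refine integrable_sq_exp.congr (Filter.Eventually.of_forall fun x => ?_)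
    simp only [Pi.mul_apply]; ring
  have hu'v : Integrable ((fun _ : ℝ => (1:ℝ)) * fun y : ℝ => -Real.exp (-(1/2) * y ^ 2)) := by
    refine ((integrable_exp_neg_mul_sq (b := 1/2) (by norm_num)).neg).congr
      (Filter.Eventually.of_forall fun x => ?_)
    simp [Pi.mul_apply]
  have h_top : Tendsto ((fun y : ℝ => y) * fun y : ℝ => -Real.exp (-(1/2) * y ^ 2))
      atTop (𝓝 0) := by
    have := tendsto_id_exp_atTop.neg
    rw [neg_zero] at this
    refine this.congr fun x => ?_
    simp only [Pi.mul_apply]; ring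
  have h_bot : Tendsto ((fun y : ℝ => y) * fun y : ℝ => -Real.exp (-(1/2) * y ^ 2))
      atBot (𝓝 0) := by
    have := tendsto_id_exp_atTop.comp tendsto_neg_atBot_atTop
    refine this.congr fun x => ?_
    simp only [Pi.mul_apply, Function.comp_apply, neg_sq]
    ring
  have key := MeasureTheory.integral_mul_deriv_eq_deriv_mul (fun x _ => hu x) (fun x _ => hv x) huv' hu'v h_bot h_top
  have h3 : ∫ x : ℝ, (1:ℝ) * (-Real.exp (-(1/2) * x ^ 2)) = -Real.sqrt (2 * π) := by
    rw [show (fun x : ℝ => (1:ℝ) * (-Real.exp (-(1/2) * x ^ 2)))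
        = fun x : ℝ => -Real.exp (-(1/2) * x ^ 2) by ext x; ring]
    rw [integral_neg, integral_gaussian (1/2)]
    norm_num
    ring
  calc ∫ x : ℝ, x ^ 2 * Real.exp (-(1/2) * x ^ 2)
      = ∫ x : ℝ, x * (x * Real.exp (-(1/2) * x ^ 2)) := by congr 1; ext x; ring
    _ = 0 - 0 - ∫ x : ℝ, 1 * (-Real.exp (-(1/2) * x ^ 2)) := key
    _ = Real.sqrt (2 * π) := by rw [h3]; ring

lemma sqrt_two_pi_pos : (0:ℝ) < Real.sqrt (2*π) := Real.sqrt_pos.mpr (by positivity)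

lemma integrable_sq_gaussian : Integrable (fun x : ℝ => x ^ 2) (gaussianReal 0 1) := by
  rw [integrable_gaussianReal_iff, gaussPDF_eq]
  have := integrable_sq_exp.const_mul (Real.sqrt (2*π))⁻¹
  refine this.congr (Filter.Eventually.of_forall fun x => ?_)
  ring

lemma integral_sq_gaussian : ∫ x, x ^ 2 ∂(gaussianReal 0 1) = 1 := by
  rw [integral_gaussianReal_eq, gaussPDF_eq]
  have h : (fun x : ℝ => (Real.sqrt (2*π))⁻¹ * Real.exp (-(1/2) * x^2) * x ^ 2)
      = fun x : ℝ => (Real.sqrt (2*π))⁻¹ * (x ^ 2 * Real.exp (-(1/2) * x^2)) := by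
    ext x; ring
  rw [h, integral_const_mul, integral_sq_exp, inv_mul_cancel₀ (ne_of_gt sqrt_two_pi_pos)]

/-! ### Integrals against the empirical distribution -/

lemma empDist_integral {N : ℕ} (v : Fin N → ℝ) (f : ℝ →ᵇ ℝ) :
    ∫ t, f t ∂(empDist v) = (N : ℝ)⁻¹ * ∑ n : Fin N, f (v n) := by
  rw [empDist, integral_smul_measure]
  rw [integral_finset_sum_measure (fun n _ => f.integrable _)]
  simp only [integral_dirac]
  rw [ENNReal.toReal_inv, ENNReal.toReal_natCast, smul_eq_mul]

/-! ### Strong law of large numbers for functions of the `Z i` -/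

lemma slln_comp {Ω : Type*} [MeasurableSpace Ω] (μ : Measure Ω) [IsProbabilityMeasure μ]
    (Z : ℕ → Ω → ℝ) (hZmeas : ∀ i, Measurable (Z i))
    (hZindep : iIndepFun Z μ)
    (hZgauss : ∀ i, Measure.map (Z i) μ = gaussianReal 0 1)
    (g : ℝ → ℝ) (hgm : Measurable g) (hgi : Integrable g (gaussianReal 0 1)) :
    ∀ᵐ ω ∂μ, Tendsto (fun N : ℕ => (N : ℝ)⁻¹ * ∑ n ∈ Finset.range N, g (Z n ω)) atTop
      (𝓝 (∫ x, g x ∂(gaussianReal 0 1))) := by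
  have hint : Integrable (fun ω => g (Z 0 ω)) μ := by
    have h := integrable_map_measure (μ := μ) (f := Z 0) (g := g)
      (by rw [hZgauss 0]; exact hgi.aestronglyMeasurable) (hZmeas 0).aemeasurable
    rw [hZgauss 0] at h
    exact h.mp hgi
  have hindep : Pairwise (Function.onFun (IndepFun · · μ) fun i ω => g (Z i ω)) := by
    intro i j hij
    exact (hZindep.indepFun hij).comp hgm hgm
  have hident : ∀ i, IdentDistrib (fun ω => g (Z i ω)) (fun ω => g (Z 0 ω)) μ μ := by
    intro i
    have h0 : IdentDistrib (Z i) (Z 0) μ μ :=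
      ⟨(hZmeas i).aemeasurable, (hZmeas 0).aemeasurable, by rw [hZgauss i, hZgauss 0]⟩
    exact h0.comp hgm
  have h := strong_law_ae_real (fun i ω => g (Z i ω)) hint hindep hident
  have hEq : μ[fun ω => g (Z 0 ω)] = ∫ x, g x ∂(gaussianReal 0 1) := by
    rw [← hZgauss 0, integral_map (hZmeas 0).aemeasurable]
    rw [hZgauss 0]; exact hgi.aestronglyMeasurable
  rw [hEq] at h
  filter_upwards [h] with ω hω
  refine hω.congr fun N => ?_
  rw [div_eq_inv_mul]

/-! ### The countable family of test functions -/

lemma Kle (M : ℕ) : (-(M:ℝ)-1) ≤ ((M:ℝ)+1) := by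
  have : (0:ℝ) ≤ M := Nat.cast_nonneg M
  linarith

abbrev KSp (M : ℕ) := C(Set.Icc (-(M:ℝ)-1) ((M:ℝ)+1), ℝ)

noncomputable def dSet (M : ℕ) : Set (KSp M) :=
  (TopologicalSpace.exists_countable_dense (KSp M)).choose

lemma dSet_countable (M : ℕ) : (dSet M).Countable :=
  (TopologicalSpace.exists_countable_dense (KSp M)).choose_spec.1

lemma dSet_dense (M : ℕ) : Dense (dSet M) :=
  (TopologicalSpace.exists_countable_dense (KSp M)).choose_spec.2

abbrev Idx : Type := Σ M : ℕ, (dSet M)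

instance : Countable Idx := by
  haveI : ∀ M, Countable (dSet M) := fun M => (dSet_countable M).to_subtype
  exact inferInstance

/-- The test function associated to an index. -/
noncomputable def G (i : Idx) : ℝ → ℝ := Set.IccExtend (Kle i.1) i.2.1

lemma G_continuous (i : Idx) : Continuous (G i) :=
  i.2.1.continuous.comp continuous_projIcc

lemma G_uniformContinuous (i : Idx) : UniformContinuous (G i) :=
  (CompactSpace.uniformContinuous_of_continuous i.2.1.continuous).comp
    (LipschitzWith.projIcc (Kle i.1)).uniformContinuous

lemma G_bound (i : Idx) (x : ℝ) : |G i x| ≤ ‖i.2.1‖ :=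
  i.2.1.norm_coe_le_norm _

lemma G_integrable (i : Idx) : Integrable (G i) (gaussianReal 0 1) :=
  ⟨(G_continuous i).aestronglyMeasurable,
    HasFiniteIntegral.of_bounded (C := ‖i.2.1‖)
      (ae_of_all _ fun x => by rw [Real.norm_eq_abs]; exact G_bound i x)⟩

lemma G_approx (f : ℝ →ᵇ ℝ) (M : ℕ) {ε : ℝ} (hε : 0 < ε) :
    ∃ i : Idx, (∀ x ∈ Set.Icc (-(M:ℝ)-1) ((M:ℝ)+1), |f x - G i x| ≤ ε) ∧
      (∀ x, |G i x| ≤ ‖f‖ + ε) := by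
  let fK : KSp M := ⟨fun x => f x, f.continuous.comp continuous_subtype_val⟩
  obtain ⟨g, hg_mem, hg_dist⟩ := (dSet_dense M).exists_dist_lt fK hε
  refine ⟨⟨M, ⟨g, hg_mem⟩⟩, fun x hx => ?_, fun x => ?_⟩
  · have h1 : G ⟨M, ⟨g, hg_mem⟩⟩ x = g ⟨x, hx⟩ := by
      simp only [G, Set.IccExtend_of_mem _ _ hx]
    rw [h1]
    have := ContinuousMap.dist_apply_le_dist (f := fK) (g := g) ⟨x, hx⟩
    calc |f x - g ⟨x, hx⟩| = dist (fK ⟨x, hx⟩) (g ⟨x, hx⟩) := by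
          simp [Real.dist_eq, fK]
      _ ≤ dist fK g := this
      _ ≤ ε := le_of_lt hg_dist
  · set y := Set.projIcc (-(M:ℝ)-1) ((M:ℝ)+1) (Kle M) x
    have h1 : G ⟨M, ⟨g, hg_mem⟩⟩ x = g y := rfl
    rw [h1]
    have h2 : |g y - fK y| ≤ ε := by
      have := ContinuousMap.dist_apply_le_dist (f := fK) (g := g) y
      rw [Real.dist_eq] at this
      calc |g y - fK y| = |fK y - g y| := abs_sub_comm _ _
        _ ≤ dist fK g := this
        _ ≤ ε := le_of_lt hg_dist
    have h3 : |fK y| ≤ ‖f‖ := f.norm_coe_le_norm y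
    calc |g y| ≤ |fK y| + |g y - fK y| := by
          have := abs_add_le (fK y) (g y - fK y); simpa [add_sub_cancel] using this
      _ ≤ ‖f‖ + ε := add_le_add h3 h2

/-! ### Deterministic averaging lemmas -/

lemma avg_bound {N : ℕ} (hN : 1 ≤ N) (u w : ℕ → ℝ) {a b : ℝ}
    (h : ∀ n, |u n| ≤ a + b * w n) :
    |(N:ℝ)⁻¹ * ∑ n ∈ Finset.range N, u n|
      ≤ a + b * ((N:ℝ)⁻¹ * ∑ n ∈ Finset.range N, w n) := by
  have hN' : (0:ℝ) < N := by exact_mod_cast Nat.pos_of_ne_zero (by omega)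
  have h1 : |∑ n ∈ Finset.range N, u n| ≤ ∑ n ∈ Finset.range N, (a + b * w n) :=
    (Finset.abs_sum_le_sum_abs _ _).trans (Finset.sum_le_sum fun n _ => h n)
  have h2 : ∑ n ∈ Finset.range N, (a + b * w n)
      = N * a + b * ∑ n ∈ Finset.range N, w n := by
    rw [Finset.sum_add_distrib, Finset.sum_const, Finset.card_range, ← Finset.mul_sum]
    ring
  rw [abs_mul, abs_inv, abs_of_nonneg (le_of_lt hN')]
  calc (N:ℝ)⁻¹ * |∑ n ∈ Finset.range N, u n|
      ≤ (N:ℝ)⁻¹ * (N * a + b * ∑ n ∈ Finset.range N, w n) := by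
        apply mul_le_mul_of_nonneg_left _ (by positivity)
        rw [← h2]; exact h1
    _ = a + b * ((N:ℝ)⁻¹ * ∑ n ∈ Finset.range N, w n) := by
        field_simp

/-- Transfer of the empirical average along a perturbation `c N * z n` of the points,
for a bounded uniformly continuous function. -/
lemma transfer {z : ℕ → ℝ} {c : ℕ → ℝ} (hc : Tendsto c atTop (𝓝 1))
    (h2 : Tendsto (fun N : ℕ => (N:ℝ)⁻¹ * ∑ n ∈ Finset.range N, z n ^ 2) atTop (𝓝 1))
    {g : ℝ → ℝ} {B L : ℝ} (hB : 0 ≤ B) (hgB : ∀ x, |g x| ≤ B) (hu : UniformContinuous g)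
    (hg : Tendsto (fun N : ℕ => (N:ℝ)⁻¹ * ∑ n ∈ Finset.range N, g (z n)) atTop (𝓝 L)) :
    Tendsto (fun N : ℕ => (N:ℝ)⁻¹ * ∑ n ∈ Finset.range N, g (c N * z n)) atTop (𝓝 L) := by
  have hdiff : Tendsto (fun N : ℕ => (N:ℝ)⁻¹ * ∑ n ∈ Finset.range N,
      (g (c N * z n) - g (z n))) atTop (𝓝 0) := by
    rw [NormedAddCommGroup.tendsto_nhds_zero]
    intro ε hε
    obtain ⟨δ, hδ, hδ'⟩ := Metric.uniformContinuous_iff.mp hu (ε/2) (by positivity)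
    have hptwise : ∀ N n, |g (c N * z n) - g (z n)|
        ≤ ε/2 + (2*B/δ^2) * ((c N - 1)^2 * z n ^ 2) := by
      intro N n
      by_cases hcase : |c N * z n - z n| < δ
      · have := hδ' (a := c N * z n) (b := z n) (by rwa [Real.dist_eq])
        rw [Real.dist_eq] at this
        have hnn : 0 ≤ (2*B/δ^2) * ((c N - 1)^2 * z n ^ 2) := by positivity
        linarith
      · push_neg at hcase
        have h1 : δ^2 ≤ (c N - 1)^2 * z n ^2 := by
          have he : |c N * z n - z n| = |(c N - 1) * z n| := by ring_nf
          rw [he, abs_mul] at hcase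
          calc δ^2 ≤ (|c N - 1| * |z n|)^2 := by
                apply sq_le_sq' _ hcase
                have : 0 ≤ |c N - 1| * |z n| := by positivity
                linarith
            _ = (c N - 1)^2 * z n ^ 2 := by rw [mul_pow, sq_abs, sq_abs]
        have h2' : |g (c N * z n) - g (z n)| ≤ 2 * B := by
          calc |g (c N * z n) - g (z n)| ≤ |g (c N * z n)| + |g (z n)| := abs_sub _ _
            _ ≤ 2 * B := by have := hgB (c N * z n); have := hgB (z n); linarith
        have h3 : 2 * B ≤ (2*B/δ^2) * ((c N - 1)^2 * z n ^ 2) := by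
          rw [div_mul_eq_mul_div, le_div_iff₀ (by positivity)]
          apply mul_le_mul_of_nonneg_left h1 (by positivity)
        have h4 : (0:ℝ) < ε/2 := by positivity
        linarith
    have hR : Tendsto (fun N : ℕ => (2*B/δ^2) * (c N - 1)^2 *
        ((N:ℝ)⁻¹ * ∑ n ∈ Finset.range N, z n ^ 2)) atTop (𝓝 0) := by
      have hc1 : Tendsto (fun N => (c N - 1)^2) atTop (𝓝 0) := by
        have := (hc.sub_const 1).pow 2
        simpa using this
      have := ((hc1.const_mul (2*B/δ^2)).mul h2)
      simpa using this
    have hev : ∀ᶠ N in atTop, (2*B/δ^2) * (c N - 1)^2 *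
        ((N:ℝ)⁻¹ * ∑ n ∈ Finset.range N, z n ^ 2) < ε/4 :=
      hR.eventually (eventually_lt_nhds (show (0:ℝ) < ε/4 by positivity))
    filter_upwards [hev, eventually_ge_atTop 1] with N hRN hN1
    have h5 := avg_bound hN1 (fun n => g (c N * z n) - g (z n)) (fun n => z n ^ 2)
      (a := ε/2) (b := (2*B/δ^2) * (c N - 1)^2)
      (fun n => by have := hptwise N n; calc |g (c N * z n) - g (z n)|
          ≤ ε/2 + (2*B/δ^2) * ((c N - 1)^2 * z n ^ 2) := this
        _ = ε/2 + (2*B/δ^2) * (c N - 1)^2 * z n ^ 2 := by ring)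
    rw [Real.norm_eq_abs]
    calc |(N:ℝ)⁻¹ * ∑ n ∈ Finset.range N, (g (c N * z n) - g (z n))|
        ≤ ε/2 + (2*B/δ^2) * (c N - 1)^2 *
          ((N:ℝ)⁻¹ * ∑ n ∈ Finset.range N, z n ^ 2) := h5
      _ < ε := by linarith
  have h6 := hg.add hdiff
  rw [add_zero] at h6
  refine h6.congr fun N => ?_
  rw [← mul_add, ← Finset.sum_add_distrib]
  congr 1
  exact Finset.sum_congr rfl fun n _ => by ring

lemma tendsto_c {z : ℕ → ℝ}
    (h2 : Tendsto (fun N : ℕ => (N:ℝ)⁻¹ * ∑ n ∈ Finset.range N, z n ^ 2) atTop (𝓝 1)) :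
    Tendsto (fun N : ℕ => Real.sqrt N / Real.sqrt (∑ n ∈ Finset.range N, z n ^ 2))
      atTop (𝓝 1) := by
  have hpos : ∀ᶠ N : ℕ in atTop, (1:ℝ)/2 < (N:ℝ)⁻¹ * ∑ n ∈ Finset.range N, z n ^ 2 :=
    h2.eventually (eventually_gt_nhds (by norm_num))
  have hd : Tendsto (fun N : ℕ => ((N:ℝ)⁻¹ * ∑ n ∈ Finset.range N, z n ^ 2)⁻¹)
      atTop (𝓝 1) := by
    simpa using h2.inv₀ one_ne_zero
  have hs : Tendsto (fun N : ℕ => Real.sqrt (((N:ℝ)⁻¹ * ∑ n ∈ Finset.range N, z n ^ 2)⁻¹))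
      atTop (𝓝 1) := by
    have := hd.sqrt
    simpa using this
  refine hs.congr' ?_
  filter_upwards [hpos, eventually_ge_atTop 1] with N hN hN1
  have hNpos : (0:ℝ) < N := by exact_mod_cast Nat.pos_of_ne_zero (by omega)
  have hSpos : (0:ℝ) < ∑ n ∈ Finset.range N, z n ^ 2 := by
    by_contra h
    push_neg at h
    have : (N:ℝ)⁻¹ * ∑ n ∈ Finset.range N, z n ^ 2 ≤ 0 :=
      mul_nonpos_iff.mpr (Or.inl ⟨le_of_lt (by positivity), h⟩)
    linarith
  rw [mul_inv, inv_inv, ← div_eq_mul_inv, Real.sqrt_div (le_of_lt hNpos)]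

/-- The main deterministic lemma. -/
lemma det (z : ℕ → ℝ)
    (h2 : Tendsto (fun N : ℕ => (N:ℝ)⁻¹ * ∑ n ∈ Finset.range N, z n ^ 2) atTop (𝓝 1))
    (hG : ∀ i : Idx, Tendsto (fun N : ℕ => (N:ℝ)⁻¹ * ∑ n ∈ Finset.range N, G i (z n)) atTop
      (𝓝 (∫ x, G i x ∂(gaussianReal 0 1))))
    (f : ℝ →ᵇ ℝ) :
    Tendsto (fun N : ℕ => (N:ℝ)⁻¹ * ∑ n ∈ Finset.range N,
      f ((Real.sqrt N / Real.sqrt (∑ m ∈ Finset.range N, z m ^ 2)) * z n)) atTop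
      (𝓝 (∫ x, f x ∂(gaussianReal 0 1))) := by
  set c : ℕ → ℝ := fun N => Real.sqrt N / Real.sqrt (∑ m ∈ Finset.range N, z m ^ 2) with hc_def
  have hc : Tendsto c atTop (𝓝 1) := tendsto_c h2
  set B := ‖f‖ with hB_def
  have hBnn : 0 ≤ B := norm_nonneg f
  have hB : ∀ x, |f x| ≤ B := fun x => f.norm_coe_le_norm x
  rw [Metric.tendsto_nhds]
  intro ε hε
  set ε1 := min (ε/8) 1 with hε1_def
  have hε1 : 0 < ε1 := lt_min (by positivity) one_pos
  have hε18 : ε1 ≤ ε/8 := min_le_left _ _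
  have hε11 : ε1 ≤ 1 := min_le_right _ _
  obtain ⟨M, hM⟩ : ∃ M : ℕ, (4*B+2)/((M:ℝ)+1)^2 < ε/8 := by
    obtain ⟨M, hM'⟩ := exists_nat_gt ((4*B+2)/(ε/8))
    refine ⟨M, ?_⟩
    rw [div_lt_iff₀ (by positivity)] at hM' ⊢
    have hM0 : (0:ℝ) ≤ M := Nat.cast_nonneg M
    nlinarith
  obtain ⟨i, hi_approx, hi_bound⟩ := G_approx f M hε1
  have hGB : ∀ x, |G i x| ≤ B + 1 := fun x => (hi_bound x).trans (by linarith)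
  have hE1 : ∀ x, |f x - G i x| ≤ ε1 + ((2*B+1)/((M:ℝ)+1)^2) * x^2 := by
    intro x
    by_cases hx : x ∈ Set.Icc (-(M:ℝ)-1) ((M:ℝ)+1)
    · have h1 := hi_approx x hx
      have h2' : 0 ≤ ((2*B+1)/((M:ℝ)+1)^2) * x^2 := by positivity
      linarith
    · simp only [Set.mem_Icc, not_and_or, not_le] at hx
      have h1 : ((M:ℝ)+1)^2 ≤ x^2 := by
        rcases hx with hx | hx
        · nlinarith
        · nlinarith
      have h2' : |f x - G i x| ≤ 2*B+1 := by
        have := hB x; have := hGB x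
        calc |f x - G i x| ≤ |f x| + |G i x| := abs_sub _ _
          _ ≤ 2*B+1 := by linarith
      have h3 : (2*B+1) * 1 ≤ ((2*B+1)/((M:ℝ)+1)^2) * x^2 := by
        rw [div_mul_eq_mul_div, le_div_iff₀ (by positivity)]
        nlinarith
      linarith
  have hint_f : Integrable (fun x => f x) (gaussianReal 0 1) := f.integrable _
  have hint_G : Integrable (G i) (gaussianReal 0 1) :=
    ⟨(G_continuous i).aestronglyMeasurable,
      HasFiniteIntegral.of_bounded (C := B+1)
        (ae_of_all _ fun x => by rw [Real.norm_eq_abs]; exact hGB x)⟩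
  have hint_rhs : Integrable (fun x => ε1 + ((2*B+1)/((M:ℝ)+1)^2) * x^2) (gaussianReal 0 1) :=
    (integrable_const ε1).add (integrable_sq_gaussian.const_mul _)
  have hE2 : |∫ x, f x ∂(gaussianReal 0 1) - ∫ x, G i x ∂(gaussianReal 0 1)|
      ≤ ε1 + (2*B+1)/((M:ℝ)+1)^2 := by
    rw [← integral_sub hint_f hint_G]
    calc |∫ x, (f x - G i x) ∂(gaussianReal 0 1)|
        ≤ ∫ x, |f x - G i x| ∂(gaussianReal 0 1) := by
          simpa [Real.norm_eq_abs] using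
            norm_integral_le_integral_norm (μ := gaussianReal 0 1) (fun x => f x - G i x)
      _ ≤ ∫ x, (ε1 + ((2*B+1)/((M:ℝ)+1)^2) * x^2) ∂(gaussianReal 0 1) :=
          integral_mono (hint_f.sub hint_G).abs hint_rhs (fun x => hE1 x)
      _ = ε1 + (2*B+1)/((M:ℝ)+1)^2 := by
          rw [integral_add (integrable_const _) (integrable_sq_gaussian.const_mul _),
            integral_const, integral_const_mul, integral_sq_gaussian]
          simp [measure_univ]
  have hT2 : Tendsto (fun N : ℕ => (N:ℝ)⁻¹ * ∑ n ∈ Finset.range N, G i (c N * z n)) atTop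
      (𝓝 (∫ x, G i x ∂(gaussianReal 0 1))) :=
    transfer hc h2 (B := B+1) (by linarith) hGB (G_uniformContinuous i) (hG i)
  have hsm : Tendsto (fun N : ℕ => (c N)^2 * ((N:ℝ)⁻¹ * ∑ n ∈ Finset.range N, z n ^ 2))
      atTop (𝓝 1) := by
    have := (hc.pow 2).mul h2
    simpa using this
  have hsm2 : ∀ᶠ N : ℕ in atTop,
      (c N)^2 * ((N:ℝ)⁻¹ * ∑ n ∈ Finset.range N, z n ^ 2) < 2 :=
    hsm.eventually (eventually_lt_nhds one_lt_two)
  have hT2' : ∀ᶠ N : ℕ in atTop,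
      dist ((N:ℝ)⁻¹ * ∑ n ∈ Finset.range N, G i (c N * z n))
        (∫ x, G i x ∂(gaussianReal 0 1)) < ε/8 :=
    Metric.tendsto_nhds.mp hT2 _ (by positivity)
  filter_upwards [hsm2, hT2', eventually_ge_atTop 1] with N hNsm hN2 hN1
  rw [Real.dist_eq]
  have havg := avg_bound hN1 (fun n => f (c N * z n) - G i (c N * z n))
    (fun n => (c N * z n)^2) (a := ε1) (b := (2*B+1)/((M:ℝ)+1)^2)
    (fun n => hE1 _)
  have hsum_eq : (N:ℝ)⁻¹ * ∑ n ∈ Finset.range N, (c N * z n)^2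
      = (c N)^2 * ((N:ℝ)⁻¹ * ∑ n ∈ Finset.range N, z n ^ 2) := by
    have h : ∑ n ∈ Finset.range N, (c N * z n)^2
        = c N ^2 * ∑ n ∈ Finset.range N, z n ^2 := by
      rw [Finset.mul_sum]
      exact Finset.sum_congr rfl fun n _ => by ring
    rw [h]; ring
  rw [hsum_eq] at havg
  have hdiff_eq : (N:ℝ)⁻¹ * ∑ n ∈ Finset.range N, (f (c N * z n) - G i (c N * z n))
      = ((N:ℝ)⁻¹ * ∑ n ∈ Finset.range N, f (c N * z n))
        - ((N:ℝ)⁻¹ * ∑ n ∈ Finset.range N, G i (c N * z n)) := by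
    rw [Finset.sum_sub_distrib, mul_sub]
  rw [hdiff_eq] at havg
  have hterm1 : |((N:ℝ)⁻¹ * ∑ n ∈ Finset.range N, f (c N * z n))
      - ((N:ℝ)⁻¹ * ∑ n ∈ Finset.range N, G i (c N * z n))|
      ≤ ε1 + ((2*B+1)/((M:ℝ)+1)^2) * 2 := by
    refine havg.trans ?_
    have hb : (0:ℝ) ≤ (2*B+1)/((M:ℝ)+1)^2 := by positivity
    nlinarith [hNsm]
  rw [Real.dist_eq] at hN2
  have hkey : (2*B+1)/((M:ℝ)+1)^2 < ε/16 := by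
    have he : (2*B+1)/((M:ℝ)+1)^2 = ((4*B+2)/((M:ℝ)+1)^2)/2 := by ring
    rw [he]; linarith
  have habs3 := abs_add_le (((N:ℝ)⁻¹ * ∑ n ∈ Finset.range N, f (c N * z n))
      - ((N:ℝ)⁻¹ * ∑ n ∈ Finset.range N, G i (c N * z n)))
    (((N:ℝ)⁻¹ * ∑ n ∈ Finset.range N, G i (c N * z n)) - ∫ x, G i x ∂(gaussianReal 0 1))
  have habs4 := abs_add_le ((((N:ℝ)⁻¹ * ∑ n ∈ Finset.range N, f (c N * z n))
      - ((N:ℝ)⁻¹ * ∑ n ∈ Finset.range N, G i (c N * z n)))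
      + (((N:ℝ)⁻¹ * ∑ n ∈ Finset.range N, G i (c N * z n)) - ∫ x, G i x ∂(gaussianReal 0 1)))
    ((∫ x, G i x ∂(gaussianReal 0 1)) - ∫ x, f x ∂(gaussianReal 0 1))
  have hE2' : |(∫ x, G i x ∂(gaussianReal 0 1)) - ∫ x, f x ∂(gaussianReal 0 1)|
      ≤ ε1 + (2*B+1)/((M:ℝ)+1)^2 := by
    rw [abs_sub_comm]; exact hE2
  calc |((N:ℝ)⁻¹ * ∑ n ∈ Finset.range N, f (c N * z n)) - ∫ x, f x ∂(gaussianReal 0 1)|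
      = |(((N:ℝ)⁻¹ * ∑ n ∈ Finset.range N, f (c N * z n))
          - ((N:ℝ)⁻¹ * ∑ n ∈ Finset.range N, G i (c N * z n)))
        + (((N:ℝ)⁻¹ * ∑ n ∈ Finset.range N, G i (c N * z n))
          - ∫ x, G i x ∂(gaussianReal 0 1))
        + ((∫ x, G i x ∂(gaussianReal 0 1)) - ∫ x, f x ∂(gaussianReal 0 1))| := by ring_nf
    _ < ε := by linarith [habs3, habs4, hterm1, hN2, hE2', hkey, hε18]

end Stmt3

/-- Let `(Zᵢ)` be i.i.d. standard Gaussians and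
`u(N) = (Z₁, …, Z_N)/√(∑ₙ Zₙ²)` (a uniform random point of the unit sphere of `ℝ^N`).
Then the empirical distribution of the coordinates of `√N · u(N)` converges weakly to the
standard Gaussian `N(0,1)` almost surely, i.e. almost surely the integral of every bounded
continuous function converges. -/
theorem stmt3 {Ω : Type*} [MeasurableSpace Ω] (μ : Measure Ω) [IsProbabilityMeasure μ]
    (Z : ℕ → Ω → ℝ) (hZmeas : ∀ i, Measurable (Z i))
    (hZindep : iIndepFun Z μ)
    (hZgauss : ∀ i, Measure.map (Z i) μ = gaussianReal 0 1)
    (u : (N : ℕ) → Ω → (Fin N → ℝ))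
    (hu : ∀ N ω (n : Fin N),
      u N ω n = Z n ω / Real.sqrt (∑ m : Fin N, (Z m ω) ^ 2)) :
    ∀ᵐ ω ∂μ, ∀ f : ℝ →ᵇ ℝ,
      Tendsto (fun N : ℕ =>
          ∫ t, f t ∂(empDist (fun n : Fin N => Real.sqrt N * u N ω n))) atTop
        (𝓝 (∫ t, f t ∂(gaussianReal 0 1))) := by

  have hsq_ae := Stmt3.slln_comp μ Z hZmeas hZindep hZgauss (fun x => x^2)
    (measurable_id.pow_const 2) Stmt3.integrable_sq_gaussian
  have hsq_ae' : ∀ᵐ ω ∂μ, Tendsto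
      (fun N : ℕ => (N:ℝ)⁻¹ * ∑ n ∈ Finset.range N, Z n ω ^ 2) atTop (𝓝 1) := by
    filter_upwards [hsq_ae] with ω hω
    have h1 : ∫ x, (fun x : ℝ => x ^ 2) x ∂(gaussianReal 0 1) = 1 := Stmt3.integral_sq_gaussian
    rw [h1] at hω
    exact hω
  have hG_ae : ∀ᵐ ω ∂μ, ∀ i : Stmt3.Idx, Tendsto
      (fun N : ℕ => (N:ℝ)⁻¹ * ∑ n ∈ Finset.range N, Stmt3.G i (Z n ω)) atTop
      (𝓝 (∫ x, Stmt3.G i x ∂(gaussianReal 0 1))) :=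
    ae_all_iff.mpr fun i => Stmt3.slln_comp μ Z hZmeas hZindep hZgauss (Stmt3.G i)
      (Stmt3.G_continuous i).measurable (Stmt3.G_integrable i)
  filter_upwards [hsq_ae', hG_ae] with ω h2ω hGω
  intro f
  have hdet := Stmt3.det (fun n => Z n ω) h2ω hGω f
  refine hdet.congr fun N => ?_
  rw [Stmt3.empDist_integral]
  congr 1
  have hS : (∑ m : Fin N, Z (↑m) ω ^ 2) = ∑ m ∈ Finset.range N, Z m ω ^ 2 :=
    Fin.sum_univ_eq_sum_range (fun m => Z m ω ^ 2) N
  rw [← Fin.sum_univ_eq_sum_range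
    (fun k => f ((Real.sqrt N / Real.sqrt (∑ m ∈ Finset.range N, Z m ω ^ 2)) * Z k ω)) N]
  apply Finset.sum_congr rfl
  intro n _
  rw [hu N ω n]
  congr 1
  rw [← hS]
  have hSnn : (0:ℝ) ≤ ∑ m : Fin N, Z (↑m) ω ^ 2 :=
    Finset.sum_nonneg fun m _ => sq_nonneg _
  rw [div_mul_eq_mul_div, mul_div_assoc, mul_comm]
end

section
/- For each n ∈ ℕ, let X_{n,1}, …, X_{n,n} be i.i.d. real random variables on a common probability space, and let f : ℝ → ℝ be a bounded measurable function. Set α_n = E[f(X_{n,1})] and S_n = ∑_{m=1}^n (f(X_{n,m}) − α_n). Then S_n/n → 0 almost surely as n → ∞. -/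
open MeasureTheory ProbabilityTheory Filter Topology
open scoped ENNReal NNReal

section Stmt15Aux

variable {Ω : Type*} [MeasurableSpace Ω] {μ : Measure Ω} [IsProbabilityMeasure μ]

lemma aux_integrable_of_bdd {g : Ω → ℝ} (hg : Measurable g) {C : ℝ} (hC : ∀ ω, |g ω| ≤ C) :
    Integrable g μ :=
  ⟨hg.aestronglyMeasurable, HasFiniteIntegral.of_bounded (C := C) (ae_of_all _ hC)⟩

lemma aux_zero {n : ℕ} {Y : Fin n → Ω → ℝ} (hYm : ∀ m, Measurable (Y m))
    (hYi : iIndepFun Y μ) {D : ℝ}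
    (hYb : ∀ m ω, |Y m ω| ≤ D) (hY0 : ∀ m, ∫ ω, Y m ω ∂μ = 0)
    (a b c d : Fin n) (hab : a ≠ b) (hac : a ≠ c) (had : a ≠ d) :
    ∫ ω, Y a ω * (Y b ω * (Y c ω * Y d ω)) ∂μ = 0 := by
  classical
  have hdisj : Disjoint ({a} : Finset (Fin n)) ({b, c, d} : Finset (Fin n)) := by
    simp [Finset.disjoint_left, hab, hac, had]
  have hbm : b ∈ ({b, c, d} : Finset (Fin n)) := by simp
  have hcm : c ∈ ({b, c, d} : Finset (Fin n)) := by simp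
  have hdm : d ∈ ({b, c, d} : Finset (Fin n)) := by simp
  have ham : a ∈ ({a} : Finset (Fin n)) := by simp
  have h1 := hYi.indepFun_finset {a} {b, c, d} hdisj hYm
  have h2 : IndepFun (Y a) (fun ω => Y b ω * (Y c ω * Y d ω)) μ := by
    have := h1.comp (_mγ := inferInstance) (_mγ' := inferInstance) (φ := fun v : (({a} : Finset (Fin n)) → ℝ) => v ⟨a, ham⟩)
      (ψ := fun v : (({b, c, d} : Finset (Fin n)) → ℝ) => v ⟨b, hbm⟩ * (v ⟨c, hcm⟩ * v ⟨d, hdm⟩))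
      (measurable_pi_apply (⟨a, ham⟩ : ({a} : Finset (Fin n)))) (by fun_prop)
    exact this
  have ia : Integrable (Y a) μ := aux_integrable_of_bdd (hYm a) (hYb a)
  have ibcd : Integrable (fun ω => Y b ω * (Y c ω * Y d ω)) μ := by
    refine aux_integrable_of_bdd (((hYm b).mul ((hYm c).mul (hYm d)))) (C := D * (D * D)) ?_
    intro ω
    have h0 : (0:ℝ) ≤ D := le_trans (abs_nonneg _) (hYb b ω)
    rw [abs_mul, abs_mul]
    exact mul_le_mul (hYb b ω) (mul_le_mul (hYb c ω) (hYb d ω) (abs_nonneg _) h0)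
      (mul_nonneg (abs_nonneg _) (abs_nonneg _)) h0
  have := h2.integral_mul_eq_mul_integral ia.aestronglyMeasurable ibcd.aestronglyMeasurable
  have e : ∫ ω, Y a ω * (Y b ω * (Y c ω * Y d ω)) ∂μ
      = integral μ (Y a * fun ω => Y b ω * (Y c ω * Y d ω)) := rfl
  rw [e, this, hY0 a, zero_mul]


lemma aux_key {β : Type*} {a b c d : β} (h1 : ¬(a = b) ∨ ¬(c = d)) (h2 : ¬(a = c) ∨ ¬(b = d))
    (h3 : ¬(a = d) ∨ ¬(b = c)) :
    (a ≠ b ∧ a ≠ c ∧ a ≠ d) ∨ (b ≠ a ∧ b ≠ c ∧ b ≠ d) ∨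
    (c ≠ a ∧ c ≠ b ∧ c ≠ d) ∨ (d ≠ a ∧ d ≠ b ∧ d ≠ c) := by
  by_cases hab : a = b
  · subst hab
    have hcd : ¬(c = d) := by tauto
    by_cases hca : c = a
    · subst hca
      have hda : ¬(d = c) := fun h => hcd h.symm
      exact Or.inr (Or.inr (Or.inr ⟨hda, hda, hda⟩))
    · by_cases hdc : d = a
      · exact Or.inr (Or.inr (Or.inl ⟨hca, hca, hcd⟩))
      · exact Or.inr (Or.inr (Or.inl ⟨hca, hca, hcd⟩))
  · by_cases hac : a = c
    · subst hac
      have hbd : ¬(b = d) := by tauto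
      exact Or.inr (Or.inl ⟨fun h => hab h.symm, fun h => hab h.symm, hbd⟩)
    · by_cases had : a = d
      · subst had
        have hbc : ¬(b = c) := by tauto
        exact Or.inr (Or.inl ⟨fun h => hab h.symm, hbc, fun h => hab h.symm⟩)
      · exact Or.inl ⟨hab, hac, had⟩

lemma aux_fourth {n : ℕ} {Y : Fin n → Ω → ℝ} (hYm : ∀ m, Measurable (Y m))
    (hYi : iIndepFun Y μ) {D : ℝ} (hD : 0 ≤ D)
    (hYb : ∀ m ω, |Y m ω| ≤ D) (hY0 : ∀ m, ∫ ω, Y m ω ∂μ = 0) :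
    ∫ ω, (∑ m, Y m ω) ^ 4 ∂μ ≤ 3 * (n : ℝ) ^ 2 * D ^ 4 := by
  classical
  set T : Fin n × Fin n × Fin n × Fin n → Ω → ℝ := fun p ω => Y p.1 ω * (Y p.2.1 ω * (Y p.2.2.1 ω * Y p.2.2.2 ω)) with hT
  have hTb : ∀ p ω, |T p ω| ≤ D ^ 4 := by
    intro p ω
    simp only [hT, abs_mul]
    calc |Y p.1 ω| * (|Y p.2.1 ω| * (|Y p.2.2.1 ω| * |Y p.2.2.2 ω|))
        ≤ D * (D * (D * D)) := by
          gcongr <;> first | exact hYb _ _ | exact abs_nonneg _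
      _ = D ^ 4 := by ring
  have hTm : ∀ p : Fin n × Fin n × Fin n × Fin n, Measurable (T p) := fun p =>
    (hYm _).mul ((hYm _).mul ((hYm _).mul (hYm _)))
  have hTi : ∀ p : Fin n × Fin n × Fin n × Fin n, Integrable (T p) μ := fun p =>
    aux_integrable_of_bdd (hTm p) (hTb p)
  have expand : ∀ ω, (∑ m, Y m ω) ^ 4 = ∑ p : Fin n × Fin n × Fin n × Fin n, T p ω := by
    intro ω
    simp only [hT, Fintype.sum_prod_type]
    rw [show (4:ℕ) = 3 + 1 by rfl, show (3:ℕ) = 2 + 1 by rfl, show (2:ℕ) = 1 + 1 by rfl,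
      pow_add, pow_add, pow_add, pow_one]
    simp only [Finset.sum_mul, Finset.mul_sum]
    refine Finset.sum_congr rfl fun a _ => Finset.sum_congr rfl fun b _ =>
      Finset.sum_congr rfl fun c _ => Finset.sum_congr rfl fun d _ => by ring
  rw [show (fun ω => (∑ m, Y m ω) ^ 4) = fun ω => ∑ p : Fin n × Fin n × Fin n × Fin n, T p ω from funext expand]
  rw [integral_finset_sum _ (fun p _ => hTi p)]
  set pred : Fin n × Fin n × Fin n × Fin n → Prop := fun p =>
    (p.1 = p.2.1 ∧ p.2.2.1 = p.2.2.2) ∨ (p.1 = p.2.2.1 ∧ p.2.1 = p.2.2.2) ∨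
    (p.1 = p.2.2.2 ∧ p.2.1 = p.2.2.1) with hpred
  have hbad : ∀ p : Fin n × Fin n × Fin n × Fin n, ¬ pred p → ∫ ω, T p ω ∂μ = 0 := by
    rintro ⟨a, b, c, d⟩ hp
    simp only [hpred, not_or, not_and_or] at hp
    obtain ⟨h1, h2, h3⟩ := hp
    have key : (a ≠ b ∧ a ≠ c ∧ a ≠ d) ∨ (b ≠ a ∧ b ≠ c ∧ b ≠ d) ∨
        (c ≠ a ∧ c ≠ b ∧ c ≠ d) ∨ (d ≠ a ∧ d ≠ b ∧ d ≠ c) := by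
      exact aux_key h1 h2 h3
    simp only [hT]
    rcases key with ⟨u, v, w⟩ | ⟨u, v, w⟩ | ⟨u, v, w⟩ | ⟨u, v, w⟩
    · exact aux_zero hYm hYi hYb hY0 a b c d u v w
    · rw [show (fun ω => Y a ω * (Y b ω * (Y c ω * Y d ω)))
        = fun ω => Y b ω * (Y a ω * (Y c ω * Y d ω)) from funext fun ω => by ring]
      exact aux_zero hYm hYi hYb hY0 b a c d u v w
    · rw [show (fun ω => Y a ω * (Y b ω * (Y c ω * Y d ω)))
        = fun ω => Y c ω * (Y a ω * (Y b ω * Y d ω)) from funext fun ω => by ring]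
      exact aux_zero hYm hYi hYb hY0 c a b d u v w
    · rw [show (fun ω => Y a ω * (Y b ω * (Y c ω * Y d ω)))
        = fun ω => Y d ω * (Y a ω * (Y b ω * Y c ω)) from funext fun ω => by ring]
      exact aux_zero hYm hYi hYb hY0 d a b c u v w
  have hint_le : ∀ p : Fin n × Fin n × Fin n × Fin n, ∫ ω, T p ω ∂μ ≤ D ^ 4 := by
    intro p
    have h := norm_integral_le_of_norm_le_const (μ := μ) (f := T p) (C := D ^ 4)
      (ae_of_all _ fun ω => by simpa [Real.norm_eq_abs] using hTb p ω)
    rw [probReal_univ, mul_one, Real.norm_eq_abs] at h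
    exact le_trans (le_abs_self _) h
  classical
  have hsplit : ∑ p : Fin n × Fin n × Fin n × Fin n, ∫ ω, T p ω ∂μ
      = ∑ p ∈ Finset.univ.filter pred, ∫ ω, T p ω ∂μ := by
    rw [← Finset.sum_filter_add_sum_filter_not Finset.univ pred]
    rw [Finset.sum_eq_zero (fun p hp => hbad p (Finset.mem_filter.mp hp).2), add_zero]
  rw [hsplit]
  have hcard : (Finset.univ.filter pred).card ≤ 3 * n ^ 2 := by
    have hsub : Finset.univ.filter pred ⊆
        (Finset.univ.filter fun p : Fin n × Fin n × Fin n × Fin n =>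
          p.1 = p.2.1 ∧ p.2.2.1 = p.2.2.2) ∪
        ((Finset.univ.filter fun p : Fin n × Fin n × Fin n × Fin n =>
          p.1 = p.2.2.1 ∧ p.2.1 = p.2.2.2) ∪
        (Finset.univ.filter fun p : Fin n × Fin n × Fin n × Fin n =>
          p.1 = p.2.2.2 ∧ p.2.1 = p.2.2.1)) := by
      rw [← Finset.filter_or, ← Finset.filter_or]
    have c1 : (Finset.univ.filter fun p : Fin n × Fin n × Fin n × Fin n =>
        p.1 = p.2.1 ∧ p.2.2.1 = p.2.2.2).card ≤ n ^ 2 := by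
      have := Finset.card_le_card_of_injOn
        (s := Finset.univ.filter fun p : Fin n × Fin n × Fin n × Fin n =>
          p.1 = p.2.1 ∧ p.2.2.1 = p.2.2.2)
        (f := fun p : Fin n × Fin n × Fin n × Fin n => (p.1, p.2.2.1))
        (t := (Finset.univ : Finset (Fin n × Fin n)))
        (fun _ _ => Finset.mem_univ _) ?_
      · simpa [sq] using this
      · rintro ⟨a, b, c, d⟩ hp ⟨a', b', c', d'⟩ hq h
        simp only [Finset.mem_coe, Finset.mem_filter] at hp hq
        obtain ⟨rfl, rfl⟩ := hp.2
        obtain ⟨rfl, rfl⟩ := hq.2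
        simp only [Prod.mk.injEq] at h
        simp [h.1, h.2]
    have c2 : (Finset.univ.filter fun p : Fin n × Fin n × Fin n × Fin n =>
        p.1 = p.2.2.1 ∧ p.2.1 = p.2.2.2).card ≤ n ^ 2 := by
      have := Finset.card_le_card_of_injOn
        (s := Finset.univ.filter fun p : Fin n × Fin n × Fin n × Fin n =>
          p.1 = p.2.2.1 ∧ p.2.1 = p.2.2.2)
        (f := fun p : Fin n × Fin n × Fin n × Fin n => (p.1, p.2.1))
        (t := (Finset.univ : Finset (Fin n × Fin n)))
        (fun _ _ => Finset.mem_univ _) ?_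
      · simpa [sq] using this
      · rintro ⟨a, b, c, d⟩ hp ⟨a', b', c', d'⟩ hq h
        simp only [Finset.mem_coe, Finset.mem_filter] at hp hq
        obtain ⟨hp1, hp2⟩ := hp.2
        obtain ⟨hq1, hq2⟩ := hq.2
        subst hp1 hp2 hq1 hq2
        simp only [Prod.mk.injEq] at h
        simp [h.1, h.2]
    have c3 : (Finset.univ.filter fun p : Fin n × Fin n × Fin n × Fin n =>
        p.1 = p.2.2.2 ∧ p.2.1 = p.2.2.1).card ≤ n ^ 2 := by
      have := Finset.card_le_card_of_injOn
        (s := Finset.univ.filter fun p : Fin n × Fin n × Fin n × Fin n =>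
          p.1 = p.2.2.2 ∧ p.2.1 = p.2.2.1)
        (f := fun p : Fin n × Fin n × Fin n × Fin n => (p.1, p.2.1))
        (t := (Finset.univ : Finset (Fin n × Fin n)))
        (fun _ _ => Finset.mem_univ _) ?_
      · simpa [sq] using this
      · rintro ⟨a, b, c, d⟩ hp ⟨a', b', c', d'⟩ hq h
        simp only [Finset.mem_coe, Finset.mem_filter] at hp hq
        obtain ⟨hp1, hp2⟩ := hp.2
        obtain ⟨hq1, hq2⟩ := hq.2
        subst hp1 hp2 hq1 hq2
        simp only [Prod.mk.injEq] at h
        simp [h.1, h.2]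
    calc (Finset.univ.filter pred).card ≤ _ := Finset.card_le_card hsub
      _ ≤ _ := le_trans (Finset.card_union_le _ _)
          (add_le_add le_rfl (Finset.card_union_le _ _))
      _ ≤ n ^ 2 + (n ^ 2 + n ^ 2) := add_le_add c1 (add_le_add c2 c3)
      _ = 3 * n ^ 2 := by ring
  calc ∑ p ∈ Finset.univ.filter pred, ∫ ω, T p ω ∂μ
      ≤ ∑ _p ∈ Finset.univ.filter pred, D ^ 4 :=
        Finset.sum_le_sum fun p _ => hint_le p
    _ = (Finset.univ.filter pred).card * D ^ 4 := by
        rw [Finset.sum_const, nsmul_eq_mul]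
    _ ≤ (3 * n ^ 2 : ℕ) * D ^ 4 := by
        have : (0:ℝ) ≤ D ^ 4 := by positivity
        exact mul_le_mul_of_nonneg_right (by exact_mod_cast Nat.cast_le.mpr hcard) this
    _ = 3 * (n : ℝ) ^ 2 * D ^ 4 := by push_cast; ring

end Stmt15Aux

/-- Let `X_{n,1}, …, X_{n,n}` be a triangular array which is i.i.d. within
each row, and let `f : ℝ → ℝ` be bounded and measurable.  With `αₙ = E[f(X_{n,1})]` and
`Sₙ = ∑ₘ (f(X_{n,m}) − αₙ)`, we have `Sₙ/n → 0` almost surely as `n → ∞`. -/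
theorem stmt15 {Ω : Type*} [MeasurableSpace Ω] (μ : Measure Ω) [IsProbabilityMeasure μ]
    (X : (n : ℕ) → Fin n → Ω → ℝ)
    (hmeas : ∀ n m, Measurable (X n m))
    -- within each row the variables are independent and identically distributed
    (hindep : ∀ n, iIndepFun (X n) μ)
    (hident : ∀ n, ∀ m m' : Fin n, Measure.map (X n m) μ = Measure.map (X n m') μ)
    (f : ℝ → ℝ) (hf : Measurable f) (hfbdd : ∃ C : ℝ, ∀ t, |f t| ≤ C)
    -- `αₙ = E[f(X_{n,m})]` (independent of `m` since the row is identically distributed)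
    (α : ℕ → ℝ) (hα : ∀ n : ℕ, ∀ m : Fin n, α n = ∫ ω, f (X n m ω) ∂μ)
    (S : ℕ → Ω → ℝ) (hS : ∀ n ω, S n ω = ∑ m : Fin n, (f (X n m ω) - α n)) :
    ∀ᵐ ω ∂μ, Tendsto (fun n : ℕ => S n ω / n) atTop (𝓝 0) := by
  obtain ⟨C, hfC⟩ := hfbdd
  have hC0 : 0 ≤ C := le_trans (abs_nonneg _) (hfC 0)
  have hSm : ∀ n, Measurable (S n) := by
    intro n
    rw [show S n = fun ω => ∑ m : Fin n, (f (X n m ω) - α n) from funext (hS n)]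
    exact Finset.measurable_sum _ fun m _ => (hf.comp (hmeas n m)).sub measurable_const
  -- bound on |α n| for nonempty rows
  have hαb : ∀ n : ℕ, ∀ _ : Fin n, |α n| ≤ C := by
    intro n m
    rw [hα n m]
    have h := norm_integral_le_of_norm_le_const (μ := μ) (f := fun ω => f (X n m ω)) (C := C)
      (ae_of_all _ fun ω => by simpa [Real.norm_eq_abs] using hfC (X n m ω))
    rwa [probReal_univ, mul_one, Real.norm_eq_abs] at h
  have hSb : ∀ n : ℕ, ∀ ω, |S n ω / n| ≤ 2 * C := by
    intro n ω
    rcases Nat.eq_zero_or_pos n with rfl | hn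
    · simp [hS 0 ω]; linarith
    · have hm : Fin n := ⟨0, hn⟩
      have h1 : |S n ω| ≤ n * (2 * C) := by
        rw [hS n ω]
        calc |∑ m : Fin n, (f (X n m ω) - α n)| ≤ ∑ m : Fin n, |f (X n m ω) - α n| :=
              Finset.abs_sum_le_sum_abs _ _
          _ ≤ ∑ _m : Fin n, (2 * C) := Finset.sum_le_sum fun m _ =>
              le_trans (abs_sub _ _) (by linarith [hfC (X n m ω), hαb n m])
          _ = n * (2 * C) := by simp [mul_comm]
      rw [abs_div, abs_of_nonneg (by positivity : (0:ℝ) ≤ (n:ℝ))]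
      rw [div_le_iff₀ (by positivity : (0:ℝ) < (n:ℝ))]
      linarith [h1]
  -- the key fourth-moment bound
  have key : ∀ n : ℕ, ∫ ω, (S n ω / n) ^ 4 ∂μ ≤ 3 * (2 * C) ^ 4 / (n:ℝ) ^ 2 := by
    intro n
    rcases Nat.eq_zero_or_pos n with rfl | hn
    · simp [hS 0]
    · set Y : Fin n → Ω → ℝ := fun m ω => f (X n m ω) - α n with hY
      have hYm : ∀ m, Measurable (Y m) := fun m => (hf.comp (hmeas n m)).sub measurable_const
      have hYb : ∀ m ω, |Y m ω| ≤ 2 * C := fun m ω =>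
        le_trans (abs_sub _ _) (by linarith [hfC (X n m ω), hαb n m])
      have hY0 : ∀ m, ∫ ω, Y m ω ∂μ = 0 := by
        intro m
        have hi : Integrable (fun ω => f (X n m ω)) μ :=
          aux_integrable_of_bdd (hf.comp (hmeas n m)) (fun ω => hfC _)
        rw [hY]
        rw [integral_sub hi (integrable_const _), integral_const]
        simp [← hα n m]
      have hYi : iIndepFun Y μ := by
        have := (hindep n).comp (fun _ => fun t : ℝ => f t - α n)
          (fun _ => hf.sub measurable_const)
        exact this
      have h4 := aux_fourth hYm hYi (by positivity : (0:ℝ) ≤ 2 * C) hYb hY0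
      have hSint : ∀ ω, S n ω = ∑ m, Y m ω := fun ω => hS n ω
      have e1 : ∫ ω, (S n ω / n) ^ 4 ∂μ = ((n:ℝ) ^ 4)⁻¹ * ∫ ω, (∑ m, Y m ω) ^ 4 ∂μ := by
        rw [← integral_const_mul]
        refine integral_congr_ae (ae_of_all _ fun ω => ?_)
        show (S n ω / (n:ℝ)) ^ 4 = ((n:ℝ) ^ 4)⁻¹ * (∑ m, Y m ω) ^ 4
        rw [hSint ω, div_pow]
        ring
      have hn' : (0:ℝ) < (n:ℝ) := by positivity
      rw [e1]
      calc ((n:ℝ) ^ 4)⁻¹ * ∫ ω, (∑ m, Y m ω) ^ 4 ∂μ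
          ≤ ((n:ℝ) ^ 4)⁻¹ * (3 * (n:ℝ) ^ 2 * (2 * C) ^ 4) := by
            exact mul_le_mul_of_nonneg_left h4 (by positivity)
        _ = 3 * (2 * C) ^ 4 / (n:ℝ) ^ 2 := by field_simp
  -- integrability of the fourth powers
  have hgm : ∀ n : ℕ, Measurable fun ω => (S n ω / n) ^ 4 := fun n =>
    ((hSm n).div_const _).pow_const _
  have hgnn : ∀ (n : ℕ) (ω : Ω), (0:ℝ) ≤ (S n ω / n) ^ 4 := fun n ω => by positivity
  have hgi : ∀ n : ℕ, Integrable (fun ω => (S n ω / n) ^ 4) μ := by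
    intro n
    refine aux_integrable_of_bdd (hgm n) (C := (2 * C) ^ 4) fun ω => ?_
    rw [abs_pow]
    exact pow_le_pow_left₀ (abs_nonneg _) (hSb n ω) 4
  -- summability of the bounds
  have hbnn : ∀ n : ℕ, (0:ℝ) ≤ 3 * (2 * C) ^ 4 / (n:ℝ) ^ 2 := fun n => by positivity
  have hsummable : Summable fun n : ℕ => 3 * (2 * C) ^ 4 / (n:ℝ) ^ 2 := by
    have h := (Real.summable_one_div_nat_pow (p := 2)).mpr one_lt_two
    have := h.mul_left (3 * (2 * C) ^ 4)
    simpa [div_eq_mul_inv] using this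
  -- the lintegral of the series is finite
  have hlint : ∀ n : ℕ, ∫⁻ ω, ENNReal.ofReal ((S n ω / n) ^ 4) ∂μ
      = ENNReal.ofReal (∫ ω, (S n ω / n) ^ 4 ∂μ) := fun n =>
    (ofReal_integral_eq_lintegral_ofReal (hgi n) (ae_of_all _ (hgnn n))).symm
  have htsum : ∫⁻ ω, ∑' n : ℕ, ENNReal.ofReal ((S n ω / n) ^ 4) ∂μ < ⊤ := by
    rw [lintegral_tsum fun n => ((hgm n).ennreal_ofReal).aemeasurable]
    calc ∑' n : ℕ, ∫⁻ ω, ENNReal.ofReal ((S n ω / n) ^ 4) ∂μ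
        = ∑' n : ℕ, ENNReal.ofReal (∫ ω, (S n ω / n) ^ 4 ∂μ) := by
          exact tsum_congr hlint
      _ ≤ ∑' n : ℕ, ENNReal.ofReal (3 * (2 * C) ^ 4 / (n:ℝ) ^ 2) :=
          ENNReal.tsum_le_tsum fun n => ENNReal.ofReal_le_ofReal (key n)
      _ = ENNReal.ofReal (∑' n : ℕ, 3 * (2 * C) ^ 4 / (n:ℝ) ^ 2) :=
          (ENNReal.ofReal_tsum_of_nonneg hbnn hsummable).symm
      _ < ⊤ := ENNReal.ofReal_lt_top
  have hae : ∀ᵐ ω ∂μ, (∑' n : ℕ, ENNReal.ofReal ((S n ω / n) ^ 4)) < ⊤ :=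
    ae_lt_top (Measurable.ennreal_tsum fun n => (hgm n).ennreal_ofReal) htsum.ne
  filter_upwards [hae] with ω hω
  have hsum' : Summable fun n : ℕ => (S n ω / n) ^ 4 := by
    have h1 := ENNReal.summable_toReal hω.ne
    refine h1.congr fun n => ?_
    rw [ENNReal.toReal_ofReal (hgnn n ω)]
  have htend4 : Tendsto (fun n : ℕ => (S n ω / n) ^ 4) atTop (𝓝 0) :=
    hsum'.tendsto_atTop_zero
  have habs : Tendsto (fun n : ℕ => |S n ω / n|) atTop (𝓝 0) := by
    have hcont : ContinuousAt (fun x : ℝ => x ^ ((4:ℝ)⁻¹)) 0 :=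
      Real.continuousAt_rpow_const 0 _ (Or.inr (by norm_num))
    have h2 := hcont.tendsto.comp htend4
    rw [Real.zero_rpow (by norm_num : ((4:ℝ)⁻¹) ≠ 0)] at h2
    have h3 : ∀ n : ℕ, ((S n ω / n) ^ 4 : ℝ) ^ ((4:ℝ)⁻¹) = |S n ω / n| := by
      intro n
      rw [show ((S n ω / n) ^ 4 : ℝ) = |S n ω / n| ^ 4 by
        rw [← abs_pow, abs_of_nonneg (hgnn n ω)]]
      rw [← Real.rpow_natCast (|S n ω / n|) 4, ← Real.rpow_mul (abs_nonneg _)]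
      norm_num
    simpa only [Function.comp_def, h3] using h2
  have hneg : Tendsto (fun n : ℕ => -|S n ω / n|) atTop (𝓝 0) := by
    simpa using habs.neg
  exact tendsto_of_tendsto_of_tendsto_of_le_of_le hneg habs
    (fun n => neg_abs_le _) (fun n => le_abs_self _)
end
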